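/- The marginal observed density of x in the random effects publication bias model, f(x | θ₀, τ, σ) ∝ φ(x; θ₀, √(τ²+σ²)) w(u(x)), is in general not equal to ∫ f(x; θ, σ) φ(θ; θ₀, τ) dθ, where f(x; θ, σ) ∝ φ(x; θ, σ) w(u(x)) is the fixed-effects publication bias density. Concretely, there exist θ₀, τ, σ and a nonconstant step function w such that these two functions of x differ. -/

import Mathlib

open MeasureTheory Set

/-- The density of `N(θ, σ²)`. -/
noncomputable def normpdf (θ σ x : ℝ) : ℝ :=
  (σ * Real.sqrt (2 * Real.pi))⁻¹ * Real.exp (-(x - θ) ^ 2 / (2 * σ ^ 2))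

/-- The standard normal CDF `Φ`. -/
noncomputable def Phi (x : ℝ) : ℝ := ∫ t in Set.Iic x, normpdf 0 1 t

lemma normpdf_nonneg (θ σ x : ℝ) (hσ : 0 < σ) : 0 ≤ normpdf θ σ x := by
  unfold normpdf
  positivity

lemma normpdf_pos (θ σ x : ℝ) (hσ : 0 < σ) : 0 < normpdf θ σ x := by
  unfold normpdf
  have := Real.sqrt_pos.2 (by positivity : (0:ℝ) < 2 * Real.pi)
  positivity

lemma normpdf_eq_gaussian (θ : ℝ) {σ : ℝ} (hσ : 0 < σ) :
    normpdf θ σ = ProbabilityTheory.gaussianPDFReal θ (⟨σ ^ 2, sq_nonneg σ⟩ : NNReal) := by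
  funext x
  unfold normpdf ProbabilityTheory.gaussianPDFReal
  have h2 : Real.sqrt (2 * Real.pi * σ ^ 2) = σ * Real.sqrt (2 * Real.pi) := by
    rw [mul_comm (2 * Real.pi), Real.sqrt_mul (sq_nonneg σ), Real.sqrt_sq hσ.le]
  show _ = (Real.sqrt (2 * Real.pi * σ ^ 2))⁻¹ * Real.exp (-(x - θ) ^ 2 / (2 * σ ^ 2))
  rw [h2]

lemma integrable_normpdf (θ : ℝ) {σ : ℝ} (hσ : 0 < σ) : Integrable (normpdf θ σ) := by
  rw [normpdf_eq_gaussian θ hσ]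
  exact ProbabilityTheory.integrable_gaussianPDFReal _ _

lemma integral_normpdf (θ : ℝ) {σ : ℝ} (hσ : 0 < σ) : ∫ x, normpdf θ σ x = 1 := by
  rw [normpdf_eq_gaussian θ hσ]
  exact ProbabilityTheory.integral_gaussianPDFReal_eq_one θ (by intro h; exact (pow_ne_zero 2 hσ.ne') (congrArg NNReal.toReal h))

lemma conv_id (x : ℝ) :
    ∫ t, normpdf t 1 x * normpdf 0 1 t = normpdf 0 (Real.sqrt 2) x := by
  have hπ : (0:ℝ) < 2 * Real.pi := by positivity
  have key : ∀ t, normpdf t 1 x * normpdf 0 1 t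
      = ((2 * Real.pi)⁻¹ * Real.exp (-x ^ 2 / 4)) * Real.exp (-((t - x / 2) ^ 2)) := by
    intro t
    simp only [normpdf, one_mul, one_pow]
    rw [mul_mul_mul_comm, ← Real.exp_add, ← mul_inv, Real.mul_self_sqrt hπ.le,
      mul_assoc, ← Real.exp_add]
    congr 1
    rw [Real.exp_eq_exp]
    ring
  simp_rw [key]
  rw [integral_const_mul]
  have htr : ∫ t, Real.exp (-((t - x / 2) ^ 2)) = Real.sqrt Real.pi := by
    have := MeasureTheory.integral_sub_right_eq_self (μ := volume) (fun t => Real.exp (-(t ^ 2))) (x / 2)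
    rw [this]
    simpa using integral_gaussian 1
  rw [htr]
  unfold normpdf
  have h2 : Real.sqrt 2 ^ 2 = 2 := Real.sq_sqrt (by norm_num)
  have hs : Real.sqrt 2 * Real.sqrt (2 * Real.pi) = 2 * Real.sqrt Real.pi := by
    rw [Real.sqrt_mul (by norm_num : (0:ℝ) ≤ 2), ← mul_assoc,
      Real.mul_self_sqrt (by norm_num : (0:ℝ) ≤ 2)]
  rw [h2, hs, sub_zero]
  rw [show (2:ℝ) * 2 = 4 by norm_num]
  have hππ : Real.sqrt Real.pi * Real.sqrt Real.pi = Real.pi := Real.mul_self_sqrt Real.pi_pos.le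
  have hc : ((2 * Real.pi)⁻¹ * Real.sqrt Real.pi) = (2 * Real.sqrt Real.pi)⁻¹ := by
    have h1 : ((2 * Real.pi)⁻¹ * Real.sqrt Real.pi) * (2 * Real.sqrt Real.pi) = 1 := by
      have h3 : ((2 * Real.pi)⁻¹ * Real.sqrt Real.pi) * (2 * Real.sqrt Real.pi)
          = (2 * (Real.sqrt Real.pi * Real.sqrt Real.pi)) * (2 * Real.pi)⁻¹ := by ring
      rw [h3, hππ, mul_inv_cancel₀ (by positivity : (2 * Real.pi) ≠ 0)]
    exact eq_inv_of_mul_eq_one_left h1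
  rw [← hc]
  ring

lemma phi_integrable : Integrable (normpdf 0 1) := integrable_normpdf 0 one_pos

lemma phi_nonneg (t : ℝ) : 0 ≤ normpdf 0 1 t := normpdf_nonneg 0 1 t one_pos

lemma Phi_mono : Monotone Phi := by
  intro a b hab
  exact setIntegral_mono_set phi_integrable.integrableOn
    (ae_of_all _ phi_nonneg) (HasSubset.Subset.eventuallyLE (Iic_subset_Iic.2 hab))

lemma Phi_add_tail (a : ℝ) : Phi a + ∫ t in Ioi a, normpdf 0 1 t = 1 := by
  rw [Phi, intervalIntegral.integral_Iic_add_Ioi phi_integrable.integrableOn phi_integrable.integrableOn,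
    integral_normpdf 0 one_pos]

lemma phi_even (t : ℝ) : normpdf 0 1 (-t) = normpdf 0 1 t := by
  unfold normpdf; ring_nf

lemma tail_zero : ∫ t in Ioi (0:ℝ), normpdf 0 1 t = 1 / 2 := by
  have hs : Phi 0 = ∫ t in Ioi (0:ℝ), normpdf 0 1 t := by
    rw [Phi]
    rw [show Iic (0:ℝ) = Iic (-0) by norm_num, ← integral_comp_neg_Ioi]
    simp_rw [phi_even]
  have := Phi_add_tail 0
  rw [hs] at this
  linarith

lemma Phi_zero : Phi 0 = 1 / 2 := by
  have := Phi_add_tail 0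
  rw [tail_zero] at this
  linarith

/-- Gaussian tail bound: for `0 < a`, `∫_{Ioi a} φ ≤ exp(-a²/2)/(a √(2π))`. -/
lemma tail_le {a : ℝ} (ha : 0 < a) :
    ∫ t in Ioi a, normpdf 0 1 t ≤ (a * Real.sqrt (2 * Real.pi))⁻¹ * Real.exp (-a ^ 2 / 2) := by
  have hπ : (0:ℝ) < Real.sqrt (2 * Real.pi) := Real.sqrt_pos.2 (by positivity)
  have hbd : ∀ t ∈ Ioi a, normpdf 0 1 t ≤
      (Real.sqrt (2 * Real.pi))⁻¹ * (Real.exp (a ^ 2 / 2) * Real.exp (-(a * t))) := by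
    intro t ht
    unfold normpdf
    rw [one_mul, ← Real.exp_add]
    exact mul_le_mul_of_nonneg_left (Real.exp_le_exp.2 (by nlinarith [sq_nonneg (t - a)]))
      (inv_nonneg.2 hπ.le)
  have hint : ∫ t in Ioi a, Real.exp (-(a * t)) = Real.exp (-(a * a)) / a := by
    have h1 : ∫ t in Ioi a, Real.exp (-(a * t)) = a⁻¹ • ∫ t in Ioi (a * a), Real.exp (-t) := by
      rw [← MeasureTheory.integral_comp_mul_left_Ioi (fun t => Real.exp (-t)) a ha]
    rw [h1, integral_exp_neg_Ioi, smul_eq_mul]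
    ring
  have hie : IntegrableOn (fun t => Real.exp (-(a * t))) (Ioi a) := by
    simpa [neg_mul] using exp_neg_integrableOn_Ioi a ha
  calc ∫ t in Ioi a, normpdf 0 1 t
      ≤ ∫ t in Ioi a, (Real.sqrt (2 * Real.pi))⁻¹ * (Real.exp (a ^ 2 / 2) * Real.exp (-(a * t))) := by
        exact setIntegral_mono_on phi_integrable.integrableOn
          ((hie.const_mul _).const_mul _) measurableSet_Ioi hbd
    _ = (Real.sqrt (2 * Real.pi))⁻¹ * (Real.exp (a ^ 2 / 2) * (Real.exp (-(a * a)) / a)) := by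
        rw [integral_const_mul, integral_const_mul, hint]
    _ = (a * Real.sqrt (2 * Real.pi))⁻¹ * Real.exp (-a ^ 2 / 2) := by
        have h4 : Real.exp (a ^ 2 / 2) * Real.exp (-(a * a)) = Real.exp (-a ^ 2 / 2) := by
          rw [← Real.exp_add]; congr 1; ring
        rw [mul_inv, ← h4]
        ring

lemma sqrt2pi_ge : (5/2 : ℝ) ≤ Real.sqrt (2 * Real.pi) := by
  rw [show (5/2:ℝ) = Real.sqrt ((5/2)^2) from (Real.sqrt_sq (by norm_num)).symm]
  apply Real.sqrt_le_sqrt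
  nlinarith [Real.pi_gt_d6]

lemma tail_one_le : ∫ t in Ioi (1:ℝ), normpdf 0 1 t ≤ 1 / 4 := by
  refine le_trans (tail_le one_pos) ?_
  have h1 : Real.exp (1/2) * Real.exp (1/2) = Real.exp 1 := by
    rw [← Real.exp_add]; norm_num
  have he : (8/5 : ℝ) ≤ Real.exp (1/2) := by
    nlinarith [Real.exp_pos (1/2), Real.exp_one_gt_d9]
  have hexp : Real.exp (-(1:ℝ)^2/2) = (Real.exp (1/2))⁻¹ := by
    rw [← Real.exp_neg]; norm_num
  rw [one_mul, hexp, ← mul_inv, show (1/4 : ℝ) = (4:ℝ)⁻¹ by norm_num]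
  apply inv_anti₀ (by norm_num)
  calc (4:ℝ) = (5/2) * (8/5) := by norm_num
    _ ≤ Real.sqrt (2*Real.pi) * Real.exp (1/2) :=
        mul_le_mul sqrt2pi_ge he (by norm_num) (le_trans (by norm_num) sqrt2pi_ge)

lemma tail_three_le : ∫ t in Ioi (3:ℝ), normpdf 0 1 t ≤ 0.05 := by
  refine le_trans (tail_le (by norm_num : (0:ℝ) < 3)) ?_
  have he : Real.exp (-(3:ℝ)^2/2) ≤ 3/8 := by
    have h1 : Real.exp (-(3:ℝ)^2/2) ≤ Real.exp (-1) := by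
      apply Real.exp_le_exp.2; norm_num
    have h2 : Real.exp (-1 : ℝ) = (Real.exp 1)⁻¹ := Real.exp_neg 1
    have h3 : (Real.exp 1)⁻¹ ≤ 3/8 := by
      rw [show (3/8 : ℝ) = ((8/3 : ℝ))⁻¹ by norm_num]
      apply inv_anti₀ (by norm_num)
      nlinarith [Real.exp_one_gt_d9]
    linarith [h1, h2 ▸ h3]
  have hc : ((3 : ℝ) * Real.sqrt (2 * Real.pi))⁻¹ ≤ 2/15 := by
    rw [show (2/15 : ℝ) = ((15/2 : ℝ))⁻¹ by norm_num]
    apply inv_anti₀ (by norm_num)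
    calc (15/2 : ℝ) = 3 * (5/2) := by norm_num
      _ ≤ 3 * Real.sqrt (2 * Real.pi) := by nlinarith [sqrt2pi_ge]
  calc ((3:ℝ) * Real.sqrt (2 * Real.pi))⁻¹ * Real.exp (-(3:ℝ)^2/2)
      ≤ (2/15) * (3/8) := by
        apply mul_le_mul hc he (Real.exp_pos _).le (by norm_num)
    _ ≤ 0.05 := by norm_num

lemma Phi_three : (0.95 : ℝ) ≤ Phi 3 := by
  have := Phi_add_tail 3
  have h := tail_three_le
  norm_num at *
  linarith

lemma tail_anti {a b : ℝ} (hab : a ≤ b) :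
    ∫ t in Ioi b, normpdf 0 1 t ≤ ∫ t in Ioi a, normpdf 0 1 t :=
  setIntegral_mono_set phi_integrable.integrableOn (ae_of_all _ phi_nonneg)
    (HasSubset.Subset.eventuallyLE (Ioi_subset_Ioi hab))

lemma setIntegral_Ioi_shift (g : ℝ → ℝ) (a t : ℝ) :
    ∫ y in Ioi a, g (y - t) = ∫ y in Ioi (a - t), g y := by
  rw [← integral_indicator measurableSet_Ioi, ← integral_indicator measurableSet_Ioi]
  rw [← MeasureTheory.integral_sub_right_eq_self (μ := volume)
    (fun y => (Ioi (a - t)).indicator g y) t]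
  congr 1
  funext y
  by_cases h : y ∈ Ioi a
  · rw [indicator_of_mem h, indicator_of_mem (by simp at h ⊢; linarith)]
  · rw [indicator_of_notMem h, indicator_of_notMem (by simp at h ⊢; linarith)]

lemma normpdf_shift (t y : ℝ) : normpdf t 1 y = normpdf 0 1 (y - t) := by
  unfold normpdf; rw [sub_zero]

lemma normpdf_tail_eq (t a : ℝ) :
    ∫ y in Ioi a, normpdf t 1 y = ∫ y in Ioi (a - t), normpdf 0 1 y := by
  simp_rw [normpdf_shift t]
  exact setIntegral_Ioi_shift (normpdf 0 1) a t

/-- the selection set -/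
def Sset : Set ℝ := {y : ℝ | 1 - Phi y ≤ 0.05}

lemma measurableSet_Sset : MeasurableSet Sset :=
  measurableSet_le (measurable_const.sub Phi_mono.measurable) measurable_const

lemma Sset_subset : Sset ⊆ Ici (0:ℝ) := by
  intro y hy
  simp only [Sset, mem_setOf_eq] at hy
  by_contra h
  simp only [mem_Ici, not_le] at h
  have := Phi_mono h.le
  rw [Phi_zero] at this
  norm_num at hy
  linarith

lemma subset_Sset : Ici (3:ℝ) ⊆ Sset := by
  intro y hy
  simp only [Sset, mem_setOf_eq]
  have := Phi_mono (mem_Ici.1 hy)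
  have h3 := Phi_three
  norm_num at *
  linarith

/-- the selection function with `ρ₂ = 1/2` -/
noncomputable def W (y : ℝ) : ℝ := if 1 - Phi y ≤ 0.05 then 1 else 1/2

lemma measurable_W : Measurable W :=
  Measurable.ite measurableSet_Sset measurable_const measurable_const

lemma W_eq (y : ℝ) : W y = 1/2 + (1/2) * Sset.indicator (fun _ => 1) y := by
  unfold W
  by_cases h : 1 - Phi y ≤ 0.05
  · rw [if_pos h, indicator_of_mem (by exact h)]
    norm_num
  · rw [if_neg h, indicator_of_notMem (by exact h)]
    norm_num

lemma W_le_one (y : ℝ) : W y ≤ 1 := by unfold W; split_ifs <;> norm_num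

lemma half_le_W (y : ℝ) : 1/2 ≤ W y := by unfold W; split_ifs <;> norm_num

lemma W_pos (y : ℝ) : 0 < W y := lt_of_lt_of_le (by norm_num) (half_le_W y)

lemma integrable_phiW (t : ℝ) : Integrable (fun y => normpdf t 1 y * W y) := by
  have := Integrable.bdd_mul (integrable_normpdf t one_pos) measurable_W.aestronglyMeasurable
    (c := 1) (ae_of_all _ fun y => by rw [Real.norm_of_nonneg (W_pos y).le]; exact W_le_one y)
  simpa [mul_comm] using this

/-- the per-θ normalization constant -/
noncomputable def D (t : ℝ) : ℝ := ∫ y, normpdf t 1 y * W y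

lemma D_def' (t : ℝ) : D t = 1/2 + (1/2) * ∫ y in Sset, normpdf t 1 y := by
  have h0 : D t = ∫ y, ((1/2) * normpdf t 1 y + (1/2) * Sset.indicator (normpdf t 1) y) := by
    unfold D
    congr 1
    funext y
    rw [W_eq]
    by_cases h : y ∈ Sset
    · rw [indicator_of_mem h, indicator_of_mem h]; ring
    · rw [indicator_of_notMem h, indicator_of_notMem h]; ring
  rw [h0, MeasureTheory.integral_add ((integrable_normpdf t one_pos).const_mul _)
      (((integrable_normpdf t one_pos).indicator measurableSet_Sset).const_mul _),
    integral_const_mul, integral_const_mul, integral_indicator measurableSet_Sset,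
    integral_normpdf t one_pos]
  ring

lemma setint_nonneg (t : ℝ) : 0 ≤ ∫ y in Sset, normpdf t 1 y :=
  setIntegral_nonneg measurableSet_Sset (fun y _ => normpdf_nonneg t 1 y one_pos)

lemma setint_le_one (t : ℝ) : ∫ y in Sset, normpdf t 1 y ≤ 1 := by
  have h := setIntegral_le_integral (μ := volume) (s := Sset) (integrable_normpdf t one_pos)
    (ae_of_all _ (fun y => normpdf_nonneg t 1 y one_pos))
  rwa [integral_normpdf t one_pos] at h

lemma D_ge_half (t : ℝ) : 1/2 ≤ D t := by
  rw [D_def']; linarith [setint_nonneg t]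

lemma D_pos (t : ℝ) : 0 < D t := lt_of_lt_of_le (by norm_num) (D_ge_half t)

lemma D_le_one (t : ℝ) : D t ≤ 1 := by
  rw [D_def']; linarith [setint_le_one t]

lemma D_ge_of_ge (t : ℝ) (ht : 3 ≤ t) : 3/4 ≤ D t := by
  have h4 : ∫ y in Ioi t, normpdf t 1 y = 1/2 := by
    rw [normpdf_tail_eq, sub_self]
    exact tail_zero
  have h3 : ∫ y in Ioi t, normpdf t 1 y ≤ ∫ y in Ioi (3:ℝ), normpdf t 1 y :=
    setIntegral_mono_set (integrable_normpdf t one_pos).integrableOn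
      (ae_of_all _ (fun y => normpdf_nonneg t 1 y one_pos))
      (HasSubset.Subset.eventuallyLE (Ioi_subset_Ioi ht))
  have h2 : ∫ y in Ioi (3:ℝ), normpdf t 1 y = ∫ y in Ici (3:ℝ), normpdf t 1 y :=
    (MeasureTheory.integral_Ici_eq_integral_Ioi).symm
  have h1 : ∫ y in Ici (3:ℝ), normpdf t 1 y ≤ ∫ y in Sset, normpdf t 1 y :=
    setIntegral_mono_set (integrable_normpdf t one_pos).integrableOn
      (ae_of_all _ (fun y => normpdf_nonneg t 1 y one_pos))
      (HasSubset.Subset.eventuallyLE subset_Sset)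
  rw [D_def']
  linarith

lemma D_le_of_le (t : ℝ) (ht : t ≤ -1) : D t ≤ 5/8 := by
  have h1 : ∫ y in Sset, normpdf t 1 y ≤ ∫ y in Ici (0:ℝ), normpdf t 1 y :=
    setIntegral_mono_set (integrable_normpdf t one_pos).integrableOn
      (ae_of_all _ (fun y => normpdf_nonneg t 1 y one_pos))
      (HasSubset.Subset.eventuallyLE Sset_subset)
  have h2 : ∫ y in Ici (0:ℝ), normpdf t 1 y = ∫ y in Ioi (0 - t), normpdf 0 1 y := by
    rw [MeasureTheory.integral_Ici_eq_integral_Ioi, normpdf_tail_eq]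
  have h3 : ∫ y in Ioi (0 - t), normpdf 0 1 y ≤ ∫ y in Ioi (1:ℝ), normpdf 0 1 y :=
    tail_anti (by linarith)
  rw [D_def']
  linarith [tail_one_le]

lemma measurable_D : Measurable D := by
  have hm : StronglyMeasurable (fun p : ℝ × ℝ => normpdf p.1 1 p.2 * W p.2) := by
    apply StronglyMeasurable.mul
    · apply Continuous.stronglyMeasurable
      unfold normpdf
      fun_prop
    · exact (measurable_W.comp measurable_snd).stronglyMeasurable
  exact hm.integral_prod_right'.measurable

lemma sqrt2_pos : (0:ℝ) < Real.sqrt 2 := Real.sqrt_pos.2 (by norm_num)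

lemma continuous_pairpdf : Continuous (fun p : ℝ × ℝ => normpdf p.1 1 p.2) := by
  unfold normpdf
  fun_prop

lemma continuous_phi : Continuous (normpdf 0 1) := by
  unfold normpdf
  fun_prop

lemma normpdf_le (t x : ℝ) : normpdf t 1 x ≤ (Real.sqrt (2 * Real.pi))⁻¹ := by
  unfold normpdf
  rw [one_mul]
  have h1 : Real.exp (-(x - t) ^ 2 / (2 * 1 ^ 2)) ≤ 1 :=
    Real.exp_le_one_iff.mpr (by nlinarith [sq_nonneg (x - t)])
  have h2 : (0:ℝ) ≤ (Real.sqrt (2 * Real.pi))⁻¹ := by positivity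
  nlinarith

/-- integrability of the double integrand for Fubini step 1 -/
lemma integrable_F1 :
    Integrable (Function.uncurry fun t y => normpdf t 1 y * W y * normpdf 0 1 t)
      (volume.prod volume) := by
  have hsm : StronglyMeasurable
      (Function.uncurry fun t y => normpdf t 1 y * W y * normpdf 0 1 t) := by
    apply StronglyMeasurable.mul
    · exact (continuous_pairpdf.stronglyMeasurable).mul
        (measurable_W.comp measurable_snd).stronglyMeasurable
    · exact (continuous_phi.comp continuous_fst).stronglyMeasurable
  rw [MeasureTheory.integrable_prod_iff hsm.aestronglyMeasurable]
  simp only [Function.uncurry_apply_pair]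
  constructor
  · apply ae_of_all
    intro t
    exact (integrable_phiW t).mul_const _
  · have hfun : (fun t => ∫ y, ‖normpdf t 1 y * W y * normpdf 0 1 t‖)
        = fun t => D t * normpdf 0 1 t := by
      funext t
      have : ∀ y, ‖normpdf t 1 y * W y * normpdf 0 1 t‖
          = normpdf t 1 y * W y * normpdf 0 1 t := by
        intro y
        exact Real.norm_of_nonneg (mul_nonneg (mul_nonneg (normpdf_nonneg t 1 y one_pos)
          (W_pos y).le) (phi_nonneg t))
      simp_rw [this]
      rw [integral_mul_const]
      rfl
    rw [hfun]
    apply Integrable.mono' phi_integrable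
      ((measurable_D.mul continuous_phi.measurable).aestronglyMeasurable)
    apply ae_of_all
    intro t
    simp only [Pi.mul_apply]
    rw [Real.norm_of_nonneg (mul_nonneg (D_pos t).le (phi_nonneg t))]
    calc D t * normpdf 0 1 t ≤ 1 * normpdf 0 1 t := by
          exact mul_le_mul_of_nonneg_right (D_le_one t) (phi_nonneg t)
      _ = normpdf 0 1 t := one_mul _

lemma fubini1 : ∫ t, D t * normpdf 0 1 t = ∫ y, normpdf 0 (Real.sqrt 2) y * W y := by
  have h1 : ∫ t, D t * normpdf 0 1 t = ∫ t, ∫ y, normpdf t 1 y * W y * normpdf 0 1 t := by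
    congr 1
    funext t
    rw [integral_mul_const]
    rfl
  rw [h1, MeasureTheory.integral_integral_swap integrable_F1]
  congr 1
  funext y
  have h2 : ∀ t, normpdf t 1 y * W y * normpdf 0 1 t
      = normpdf t 1 y * normpdf 0 1 t * W y := by intro t; ring
  simp_rw [h2]
  rw [integral_mul_const, conv_id]

lemma integrable_prodsec (x : ℝ) : Integrable (fun t => normpdf t 1 x * normpdf 0 1 t) := by
  have hc : Continuous (fun t => normpdf t 1 x * normpdf 0 1 t) := by
    unfold normpdf; fun_prop
  apply Integrable.mono' (phi_integrable.const_mul ((Real.sqrt (2 * Real.pi))⁻¹))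
    hc.aestronglyMeasurable
  apply ae_of_all
  intro t
  rw [Real.norm_of_nonneg (mul_nonneg (normpdf_nonneg t 1 x one_pos) (phi_nonneg t))]
  exact mul_le_mul_of_nonneg_right (normpdf_le t x) (phi_nonneg t)

lemma measurable_G : StronglyMeasurable
    (Function.uncurry fun x t => normpdf t 1 x / D t * normpdf 0 1 t) := by
  apply Measurable.stronglyMeasurable
  exact (((continuous_pairpdf.comp (continuous_snd.prodMk continuous_fst)).measurable.div
    (measurable_D.comp measurable_snd)).mul (continuous_phi.comp continuous_snd).measurable)

lemma G_nonneg (x t : ℝ) : 0 ≤ normpdf t 1 x / D t * normpdf 0 1 t :=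
  mul_nonneg (div_nonneg (normpdf_nonneg t 1 x one_pos) (D_pos t).le) (phi_nonneg t)

lemma G_le (x t : ℝ) : normpdf t 1 x / D t * normpdf 0 1 t
    ≤ 2 * (normpdf t 1 x * normpdf 0 1 t) := by
  have hD := D_ge_half t
  have h1 : normpdf t 1 x / D t ≤ normpdf t 1 x * 2 := by
    rw [div_le_iff₀ (D_pos t)]
    nlinarith [normpdf_nonneg t 1 x one_pos]
  calc normpdf t 1 x / D t * normpdf 0 1 t ≤ (normpdf t 1 x * 2) * normpdf 0 1 t :=
        mul_le_mul_of_nonneg_right h1 (phi_nonneg t)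
    _ = 2 * (normpdf t 1 x * normpdf 0 1 t) := by ring

lemma integrable_G :
    Integrable (Function.uncurry fun x t => normpdf t 1 x / D t * normpdf 0 1 t)
      (volume.prod volume) := by
  rw [MeasureTheory.integrable_prod_iff measurable_G.aestronglyMeasurable]
  simp only [Function.uncurry_apply_pair]
  constructor
  · apply ae_of_all
    intro x
    have hc1 : Continuous (fun t : ℝ => normpdf t 1 x) := by
      unfold normpdf; fun_prop
    apply Integrable.mono' ((integrable_prodsec x).const_mul 2)
      ((hc1.measurable.div measurable_D).mul continuous_phi.measurable).aestronglyMeasurable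
    exact ae_of_all _ (fun t => by
      simp only [Pi.mul_apply, Pi.div_apply]; rw [Real.norm_of_nonneg (G_nonneg x t)]; exact G_le x t)
  · have hfun : (fun x => ∫ t, ‖normpdf t 1 x / D t * normpdf 0 1 t‖)
        = fun x => ∫ t, normpdf t 1 x / D t * normpdf 0 1 t := by
      funext x
      congr 1
      funext t
      exact Real.norm_of_nonneg (G_nonneg x t)
    rw [hfun]
    apply Integrable.mono' ((integrable_normpdf 0 sqrt2_pos).const_mul 2)
      measurable_G.integral_prod_right'.aestronglyMeasurable
    apply ae_of_all
    intro x
    simp only [Function.uncurry_apply_pair]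
    rw [Real.norm_of_nonneg (integral_nonneg (G_nonneg x))]
    calc ∫ t, normpdf t 1 x / D t * normpdf 0 1 t
        ≤ ∫ t, 2 * (normpdf t 1 x * normpdf 0 1 t) :=
          integral_mono_of_nonneg (ae_of_all _ (G_nonneg x))
            ((integrable_prodsec x).const_mul 2) (ae_of_all _ (G_le x))
      _ = 2 * normpdf 0 (Real.sqrt 2) x := by rw [integral_const_mul, conv_id]

lemma fubini2 : ∫ x, (∫ t, normpdf t 1 x / D t * normpdf 0 1 t)
    = ∫ t, 1 / D t * normpdf 0 1 t := by
  rw [MeasureTheory.integral_integral_swap integrable_G]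
  congr 1
  funext t
  have h2 : ∀ x, normpdf t 1 x / D t * normpdf 0 1 t
      = normpdf t 1 x * (normpdf 0 1 t / D t) := by intro x; ring
  simp_rw [h2]
  rw [integral_mul_const, integral_normpdf t one_pos]
  ring

lemma integrable_Dphi : Integrable (fun t => D t * normpdf 0 1 t) := by
  apply Integrable.mono' phi_integrable
    ((measurable_D.mul continuous_phi.measurable).aestronglyMeasurable)
  apply ae_of_all
  intro t
  simp only [Pi.mul_apply]
  rw [Real.norm_of_nonneg (mul_nonneg (D_pos t).le (phi_nonneg t))]
  calc D t * normpdf 0 1 t ≤ 1 * normpdf 0 1 t :=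
        mul_le_mul_of_nonneg_right (D_le_one t) (phi_nonneg t)
    _ = normpdf 0 1 t := one_mul _

lemma invD_le (t : ℝ) : 1 / D t ≤ 2 := by
  rw [div_le_iff₀ (D_pos t)]
  linarith [D_ge_half t]

lemma invD_nonneg (t : ℝ) : 0 ≤ 1 / D t := div_nonneg zero_le_one (D_pos t).le

lemma integrable_invDphi : Integrable (fun t => 1 / D t * normpdf 0 1 t) := by
  apply Integrable.mono' (phi_integrable.const_mul 2)
    (((measurable_const.div measurable_D).mul continuous_phi.measurable).aestronglyMeasurable)
  apply ae_of_all
  intro t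
  simp only [Pi.mul_apply, Pi.div_apply, Pi.one_apply]
  rw [Real.norm_of_nonneg (mul_nonneg (invD_nonneg t) (phi_nonneg t))]
  exact mul_le_mul_of_nonneg_right (invD_le t) (phi_nonneg t)

lemma Cc_eq : ∫ y, normpdf 0 (Real.sqrt 2) y * W y = ∫ t, D t * normpdf 0 1 t := fubini1.symm

lemma Cc_ge_half : 1/2 ≤ ∫ y, normpdf 0 (Real.sqrt 2) y * W y := by
  rw [Cc_eq]
  have h1 : ∫ t, (1/2 : ℝ) * normpdf 0 1 t = 1/2 := by
    rw [integral_const_mul, integral_normpdf 0 one_pos, mul_one]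
  rw [← h1]
  apply integral_mono (phi_integrable.const_mul _) integrable_Dphi
  intro t
  exact mul_le_mul_of_nonneg_right (D_ge_half t) (phi_nonneg t)

lemma Cc_le_one : ∫ y, normpdf 0 (Real.sqrt 2) y * W y ≤ 1 := by
  rw [Cc_eq]
  have h1 : ∫ t, normpdf 0 1 t = 1 := integral_normpdf 0 one_pos
  conv_rhs => rw [← h1]
  apply integral_mono integrable_Dphi phi_integrable
  intro t
  calc D t * normpdf 0 1 t ≤ 1 * normpdf 0 1 t :=
        mul_le_mul_of_nonneg_right (D_le_one t) (phi_nonneg t)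
    _ = normpdf 0 1 t := one_mul _

lemma key : ∃ x : ℝ,
    normpdf 0 (Real.sqrt (1^2 + 1^2)) x * (if 1 - Phi (x/1) ≤ 0.05 then (1:ℝ) else 1/2) /
      (∫ y, normpdf 0 (Real.sqrt (1^2 + 1^2)) y * (if 1 - Phi (y/1) ≤ 0.05 then (1:ℝ) else 1/2)) ≠
    ∫ t, normpdf t 1 x * (if 1 - Phi (x/1) ≤ 0.05 then (1:ℝ) else 1/2) /
      (∫ y, normpdf t 1 y * (if 1 - Phi (y/1) ≤ 0.05 then (1:ℝ) else 1/2)) * normpdf 0 1 t := by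
  have hs2 : Real.sqrt (1^2 + 1^2 : ℝ) = Real.sqrt 2 := by norm_num
  simp only [div_one, hs2]
  show ∃ x : ℝ, normpdf 0 (Real.sqrt 2) x * W x / (∫ y, normpdf 0 (Real.sqrt 2) y * W y) ≠
    ∫ t, normpdf t 1 x * W x / D t * normpdf 0 1 t
  by_contra hcon
  push_neg at hcon
  set Cc := ∫ y, normpdf 0 (Real.sqrt 2) y * W y with hCc
  have hCge : 1/2 ≤ Cc := by rw [hCc]; exact Cc_ge_half
  have hCle : Cc ≤ 1 := by rw [hCc]; exact Cc_le_one
  have hCpos : 0 < Cc := lt_of_lt_of_le one_half_pos hCge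
  have h1 : ∀ x, normpdf 0 (Real.sqrt 2) x / Cc = ∫ t, normpdf t 1 x / D t * normpdf 0 1 t := by
    intro x
    have hx := hcon x
    have hr : ∫ t, normpdf t 1 x * W x / D t * normpdf 0 1 t
        = W x * ∫ t, normpdf t 1 x / D t * normpdf 0 1 t := by
      rw [← integral_const_mul]
      congr 1
      funext t
      ring
    rw [hr] at hx
    have hl : normpdf 0 (Real.sqrt 2) x * W x / Cc = W x * (normpdf 0 (Real.sqrt 2) x / Cc) := by
      ring
    rw [hl] at hx
    exact mul_left_cancel₀ (W_pos x).ne' hx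
  have hinv : (1:ℝ) / Cc = ∫ t, 1 / D t * normpdf 0 1 t := by
    calc (1:ℝ)/Cc = ∫ x, normpdf 0 (Real.sqrt 2) x / Cc := by
          rw [integral_div, integral_normpdf 0 sqrt2_pos]
      _ = ∫ x, ∫ t, normpdf t 1 x / D t * normpdf 0 1 t := by
          congr 1
          funext x
          exact h1 x
      _ = ∫ t, 1 / D t * normpdf 0 1 t := fubini2
  have hDint : Cc = ∫ t, D t * normpdf 0 1 t := by rw [hCc]; exact Cc_eq
  have hpt : ∀ t, (D t - Cc)^2 / D t * normpdf 0 1 t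
      = D t * normpdf 0 1 t - (2*Cc) * normpdf 0 1 t + Cc^2 * (1 / D t * normpdf 0 1 t) := by
    intro t
    have hD := (D_pos t).ne'
    field_simp
    ring
  have hint : Integrable (fun t => (D t - Cc)^2 / D t * normpdf 0 1 t) := by
    have heq : (fun t => (D t - Cc)^2 / D t * normpdf 0 1 t)
        = fun t => D t * normpdf 0 1 t - (2*Cc) * normpdf 0 1 t
            + Cc^2 * (1 / D t * normpdf 0 1 t) := funext hpt
    rw [heq]
    exact (integrable_Dphi.sub (phi_integrable.const_mul _)).add (integrable_invDphi.const_mul _)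
  have hzero : ∫ t, (D t - Cc)^2 / D t * normpdf 0 1 t = 0 := by
    simp_rw [hpt]
    have hA : Integrable (fun t => D t * normpdf 0 1 t - 2 * Cc * normpdf 0 1 t) :=
      integrable_Dphi.sub (phi_integrable.const_mul (2 * Cc))
    have hB : Integrable (fun t => Cc^2 * (1 / D t * normpdf 0 1 t)) :=
      integrable_invDphi.const_mul _
    rw [integral_add hA hB,
      integral_sub integrable_Dphi (phi_integrable.const_mul (2 * Cc)),
      integral_const_mul, integral_const_mul, integral_normpdf 0 one_pos, ← hDint, ← hinv]
    field_simp
    ring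
  have hae := (integral_eq_zero_iff_of_nonneg
    (fun t => mul_nonneg (div_nonneg (sq_nonneg _) (D_pos t).le) (phi_nonneg t)) hint).mp hzero
  simp only [Filter.EventuallyEq, Pi.zero_apply] at hae
  have hnull := MeasureTheory.ae_iff.mp hae
  rcases le_or_gt Cc (11/16) with hc | hc
  · have hsub : Ici (3:ℝ) ⊆ {t | ¬ (D t - Cc)^2 / D t * normpdf 0 1 t = 0} := by
      intro t ht
      have h3 := D_ge_of_ge t (mem_Ici.1 ht)
      have hpos : 0 < (D t - Cc)^2 / D t * normpdf 0 1 t :=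
        mul_pos (div_pos (pow_pos (by linarith) 2) (D_pos t)) (normpdf_pos 0 1 t one_pos)
      exact fun h => hpos.ne' h
    have h5 := measure_mono (μ := volume) hsub
    rw [hnull] at h5
    rw [Real.volume_Ici] at h5
    simp at h5
  · have hsub : Iic (-1:ℝ) ⊆ {t | ¬ (D t - Cc)^2 / D t * normpdf 0 1 t = 0} := by
      intro t ht
      have h3 := D_le_of_le t (mem_Iic.1 ht)
      have hsq : 0 < (D t - Cc)^2 := by
        rw [show (D t - Cc)^2 = (Cc - D t)^2 by ring]
        exact pow_pos (by linarith) 2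
      have hpos : 0 < (D t - Cc)^2 / D t * normpdf 0 1 t :=
        mul_pos (div_pos hsq (D_pos t)) (normpdf_pos 0 1 t one_pos)
      exact fun h => hpos.ne' h
    have h5 := measure_mono (μ := volume) hsub
    rw [hnull] at h5
    rw [Real.volume_Iic] at h5
    simp at h5

/-- The marginal observed density of the random effects publication bias model,
`f(x|θ₀,τ,σ) ∝ φ(x; θ₀, √(τ²+σ²)) w(u(x))`, is in general not the mixture over
`θ ~ N(θ₀, τ²)` of the per-`θ` normalized fixed-effects publication bias densities:
there are parameters `θ₀, τ, σ` and a nonconstant step selection probability `w`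
(a two-valued step function with second level `ρ₂ ∈ (0,1)`) for which the two
functions of `x` differ somewhere. -/
theorem stmt7 :
    ∃ (θ₀ τ σ ρ₂ : ℝ), 0 < τ ∧ 0 < σ ∧ 0 < ρ₂ ∧ ρ₂ < 1 ∧
      let u : ℝ → ℝ := fun x => 1 - Phi (x / σ)
      let w : ℝ → ℝ := fun t => if t ≤ 0.05 then 1 else ρ₂
      let s2 : ℝ := Real.sqrt (τ ^ 2 + σ ^ 2)
      ∃ x : ℝ,
        normpdf θ₀ s2 x * w (u x) / (∫ y, normpdf θ₀ s2 y * w (u y)) ≠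
          ∫ t, normpdf t σ x * w (u x) / (∫ y, normpdf t σ y * w (u y)) *
            normpdf θ₀ τ t := by
  exact ⟨0, 1, 1, 1/2, one_pos, one_pos, by norm_num, by norm_num, key⟩
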